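/- Splitting Lemma for S-polyregular functions: let n ∈ ℕ and let f : ℍ → ℍ be S-polyregular of level n in decomposed form, f(q) = ∑_{k=0}^{n} q̄^k·φ_k(q), where φ_k(q) = ∑_j q^j·a_{j,k} with ∑_j |a_{j,k}|·r^j < ∞ for all r > 0. Let I, J ∈ 𝕊 with I·J = −J·I. Then there exist coefficients b_{j,k}, c_{j,k} ∈ ℂ_I := ℝ + ℝI (0 ≤ k ≤ n, j ∈ ℕ) with ∑_j |b_{j,k}|·r^j < ∞ and ∑_j |c_{j,k}|·r^j < ∞ for all r > 0, such that for all (x,y) ∈ ℝ²: f(x+Iy) = F(x,y) + G(x,y)·J, where F(x,y) = ∑_{k=0}^{n} (x−Iy)^k·∑_j (x+Iy)^j·b_{j,k} and G(x,y) = ∑_{k=0}^{n} (x−Iy)^k·∑_j (x+Iy)^j·c_{j,k}; in particular F and G take values in ℂ_I. -/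

import Mathlib

open scoped Quaternion

noncomputable section

private lemma quat_re_zero (I : ℍ[ℝ]) (hI : I * I = -1) : I.re = 0 := by
  have h1 := congrArg QuaternionAlgebra.re hI
  have h2 := congrArg QuaternionAlgebra.imI hI
  have h3 := congrArg QuaternionAlgebra.imJ hI
  have h4 := congrArg QuaternionAlgebra.imK hI
  simp [Quaternion.re_mul, Quaternion.imI_mul, Quaternion.imJ_mul,
    Quaternion.imK_mul] at h1 h2 h3 h4
  nlinarith [sq_nonneg I.re, sq_nonneg I.imI, sq_nonneg I.imJ, sq_nonneg I.imK]

private lemma quat_commutant (I q : ℍ[ℝ]) (hI : I * I = -1) (hq : q * I = I * q) :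
    ∃ s t : ℝ, q = (s : ℍ[ℝ]) + t • I := by
  have hre : I.re = 0 := quat_re_zero I hI
  have hnorm : I.imI ^ 2 + I.imJ ^ 2 + I.imK ^ 2 = 1 := by
    have h1 := congrArg QuaternionAlgebra.re hI
    simp [Quaternion.re_mul, hre] at h1
    nlinarith
  have c1 := congrArg QuaternionAlgebra.imI hq
  have c2 := congrArg QuaternionAlgebra.imJ hq
  have c3 := congrArg QuaternionAlgebra.imK hq
  simp [Quaternion.imI_mul, Quaternion.imJ_mul, Quaternion.imK_mul, hre] at c1 c2 c3
  refine ⟨q.re, q.imI * I.imI + q.imJ * I.imJ + q.imK * I.imK, ?_⟩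
  ext
  · simp [hre]
  · simp [hre]; linear_combination (-q.imI) * hnorm + (I.imJ/2) * c3 - (I.imK/2) * c2
  · simp [hre]; linear_combination (-q.imJ) * hnorm - (I.imI/2) * c3 + (I.imK/2) * c1
  · simp [hre]; linear_combination (-q.imK) * hnorm + (I.imI/2) * c2 - (I.imJ/2) * c1

private lemma quat_norm_one (I : ℍ[ℝ]) (hI : I * I = -1) : ‖I‖ = 1 := by
  have h : ‖I‖ * ‖I‖ = 1 := by rw [← norm_mul, hI]; simp
  nlinarith [norm_nonneg I]

private lemma quat_star_eq_neg (I : ℍ[ℝ]) (hI : I * I = -1) : star I = -I := by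
  have hre : I.re = 0 := quat_re_zero I hI
  ext <;> simp [hre]

/-- Splitting Lemma for S-polyregular functions. -/
theorem stmt5 (n : ℕ) (f : ℍ[ℝ] → ℍ[ℝ]) (a : ℕ → ℕ → ℍ[ℝ])
    (ha : ∀ k, k ≤ n → ∀ r : ℝ, 0 < r → Summable fun j : ℕ => ‖a j k‖ * r ^ j)
    (hf : ∀ q : ℍ[ℝ],
      f q = ∑ k ∈ Finset.range (n + 1), (star q) ^ k * ∑' j : ℕ, q ^ j * a j k)
    (I J : ℍ[ℝ]) (hI : I * I = -1) (hJ : J * J = -1) (hIJ : I * J = -(J * I)) :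
    ∃ b c : ℕ → ℕ → ℍ[ℝ],
      (∀ j k : ℕ, ∃ s t : ℝ, b j k = (s : ℍ[ℝ]) + t • I) ∧
      (∀ j k : ℕ, ∃ s t : ℝ, c j k = (s : ℍ[ℝ]) + t • I) ∧
      (∀ k, k ≤ n → ∀ r : ℝ, 0 < r → Summable fun j : ℕ => ‖b j k‖ * r ^ j) ∧
      (∀ k, k ≤ n → ∀ r : ℝ, 0 < r → Summable fun j : ℕ => ‖c j k‖ * r ^ j) ∧
      ∀ x y : ℝ,
        f ((x : ℍ[ℝ]) + I * (y : ℍ[ℝ])) =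
          (∑ k ∈ Finset.range (n + 1),
              ((x : ℍ[ℝ]) - I * (y : ℍ[ℝ])) ^ k *
                ∑' j : ℕ, ((x : ℍ[ℝ]) + I * (y : ℍ[ℝ])) ^ j * b j k) +
            (∑ k ∈ Finset.range (n + 1),
                ((x : ℍ[ℝ]) - I * (y : ℍ[ℝ])) ^ k *
                  ∑' j : ℕ, ((x : ℍ[ℝ]) + I * (y : ℍ[ℝ])) ^ j * c j k) * J := by
  have hnI : ‖I‖ = 1 := quat_norm_one I hI
  have hnJ : ‖J‖ = 1 := quat_norm_one J hJ
  -- the splitting of the coefficients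
  set b : ℕ → ℕ → ℍ[ℝ] := fun j k => (1/2 : ℝ) • (a j k - I * a j k * I) with hb
  set c : ℕ → ℕ → ℍ[ℝ] := fun j k => (1/2 : ℝ) • (-((a j k + I * a j k * I) * J)) with hc
  -- basic algebraic identities
  have h1 : ∀ u : ℍ[ℝ], I * (I * u * I) = -(u * I) := by
    intro u
    rw [← mul_assoc, ← mul_assoc, hI]
    simp
  have h2 : ∀ u : ℍ[ℝ], (I * u * I) * I = -(I * u) := by
    intro u
    rw [mul_assoc, hI]
    simp
  -- b commutes with I
  have hbI : ∀ j k, b j k * I = I * b j k := by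
    intro j k
    rw [hb]
    simp only [smul_mul_assoc, mul_smul_comm]
    congr 1
    rw [mul_sub, sub_mul, h1, h2]
    abel
  -- c commutes with I
  have hwI : ∀ u : ℍ[ℝ], I * (u + I * u * I) = -((u + I * u * I) * I) := by
    intro u
    rw [mul_add, add_mul, h1, h2]
    abel
  have hcI : ∀ j k, c j k * I = I * c j k := by
    intro j k
    rw [hc]
    simp only [smul_mul_assoc, mul_smul_comm]
    congr 1
    have hJI : J * I = -(I * J) := by rw [hIJ, neg_neg]
    calc -((a j k + I * a j k * I) * J) * I
        = -((a j k + I * a j k * I) * (J * I)) := by rw [neg_mul, mul_assoc]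
      _ = (a j k + I * a j k * I) * (I * J) := by rw [hJI]; simp
      _ = ((a j k + I * a j k * I) * I) * J := by rw [← mul_assoc]
      _ = -(I * (a j k + I * a j k * I)) * J := by rw [hwI]; simp
      _ = I * -((a j k + I * a j k * I) * J) := by
          rw [neg_mul, mul_neg, mul_assoc]
  -- reconstruction : a = b + c * J
  have hbc : ∀ j k, a j k = b j k + c j k * J := by
    intro j k
    rw [hb, hc]
    simp only [smul_mul_assoc]
    have : -((a j k + I * a j k * I) * J) * J = a j k + I * a j k * I := by
      rw [neg_mul, mul_assoc, hJ]
      simp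
    rw [this]
    module
  -- norm bounds
  have hIq : ∀ u : ℍ[ℝ], ‖I * u * I‖ = ‖u‖ := by
    intro u
    rw [norm_mul, norm_mul, hnI, one_mul, mul_one]
  have hbn : ∀ j k, ‖b j k‖ ≤ ‖a j k‖ := by
    intro j k
    rw [hb]
    simp only [norm_smul]
    calc ‖(1/2 : ℝ)‖ * ‖a j k - I * a j k * I‖
        ≤ (1/2) * (‖a j k‖ + ‖I * a j k * I‖) := by
          gcongr
          · norm_num
          · exact norm_sub_le _ _
      _ = ‖a j k‖ := by rw [hIq]; ring
  have hcn : ∀ j k, ‖c j k‖ ≤ ‖a j k‖ := by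
    intro j k
    rw [hc]
    simp only [norm_smul, norm_neg, norm_mul, hnJ, mul_one]
    calc ‖(1/2 : ℝ)‖ * ‖a j k + I * a j k * I‖
        ≤ (1/2) * (‖a j k‖ + ‖I * a j k * I‖) := by
          gcongr
          · norm_num
          · exact norm_add_le _ _
      _ = ‖a j k‖ := by rw [hIq]; ring
  -- summability
  have hsum : ∀ (d : ℕ → ℕ → ℍ[ℝ]), (∀ j k, ‖d j k‖ ≤ ‖a j k‖) →
      ∀ k, k ≤ n → ∀ r : ℝ, 0 < r → Summable fun j : ℕ => ‖d j k‖ * r ^ j := by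
    intro d hd k hk r hr
    refine Summable.of_nonneg_of_le (fun j => ?_) (fun j => ?_) (ha k hk r hr)
    · positivity
    · exact mul_le_mul_of_nonneg_right (hd j k) (by positivity)
  refine ⟨b, c, ?_, ?_, hsum b hbn, hsum c hcn, ?_⟩
  · intro j k
    exact quat_commutant I (b j k) hI (hbI j k)
  · intro j k
    exact quat_commutant I (c j k) hI (hcI j k)
  -- the splitting identity
  intro x y
  set q : ℍ[ℝ] := (x : ℍ[ℝ]) + I * (y : ℍ[ℝ]) with hq
  have hstar : star q = (x : ℍ[ℝ]) - I * (y : ℍ[ℝ]) := by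
    rw [hq, star_add, star_mul, Quaternion.star_coe, Quaternion.star_coe,
      quat_star_eq_neg I hI, mul_neg, Quaternion.coe_commutes, ← sub_eq_add_neg]
  -- summability of the power series at q
  have hsq : ∀ (d : ℕ → ℕ → ℍ[ℝ]), (∀ j k, ‖d j k‖ ≤ ‖a j k‖) →
      ∀ k, k ≤ n → Summable fun j : ℕ => q ^ j * d j k := by
    intro d hd k hk
    refine Summable.of_norm ?_
    refine Summable.of_nonneg_of_le (fun j => norm_nonneg _) (fun j => ?_)
      (hsum d hd k hk (‖q‖ + 1) (by positivity))
    rw [norm_mul, norm_pow]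
    calc ‖q‖ ^ j * ‖d j k‖ ≤ (‖q‖ + 1) ^ j * ‖d j k‖ := by
          gcongr; linarith
      _ = ‖d j k‖ * (‖q‖ + 1) ^ j := by ring
  have had : ∀ j k : ℕ, ‖a j k‖ ≤ ‖a j k‖ := fun _ _ => le_refl _
  -- rewrite the inner sums
  have hinner : ∀ k, k ≤ n →
      (∑' j : ℕ, q ^ j * a j k) =
        (∑' j : ℕ, q ^ j * b j k) + (∑' j : ℕ, q ^ j * c j k) * J := by
    intro k hk
    rw [← tsum_mul_right]
    rw [← Summable.tsum_add (hsq b hbn k hk) ((hsq c hcn k hk).mul_right J)]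
    congr 1
    funext j
    rw [hbc j k, mul_add, mul_assoc]
  rw [hf q, hstar]
  have : ∀ k ∈ Finset.range (n + 1),
      ((x : ℍ[ℝ]) - I * (y : ℍ[ℝ])) ^ k * ∑' j : ℕ, q ^ j * a j k =
      ((x : ℍ[ℝ]) - I * (y : ℍ[ℝ])) ^ k * ∑' j : ℕ, q ^ j * b j k +
      (((x : ℍ[ℝ]) - I * (y : ℍ[ℝ])) ^ k * ∑' j : ℕ, q ^ j * c j k) * J := by
    intro k hk
    rw [hinner k (Nat.lt_succ_iff.mp (Finset.mem_range.mp hk)), mul_add, mul_assoc]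
  rw [Finset.sum_congr rfl this, Finset.sum_add_distrib, Finset.sum_mul]
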